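/- Let m, n be positive naturals and let k : Fin n → ℕ satisfy k i < 2^m for all i. Define V = Σ_{i<n} 2^{m·i} · k i. Then for each i, k i = (V >>> (m·i)) AND (2^m - 1); that is, vector encoding of elements of width m is injectively decodable by shifting and masking. -/

import Mathlib

theorem vector_decode (m n : ℕ) (hm : 0 < m) (hn : 0 < n)
    (k : Fin n → ℕ) (hk : ∀ i, k i < 2 ^ m) (i : Fin n) :
    k i = ((∑ j : Fin n, 2 ^ (m * (j : ℕ)) * k j) >>> (m * (i : ℕ))) &&& (2 ^ m - 1) := by
  rw [Nat.and_two_pow_sub_one_eq_mod, Nat.shiftRight_eq_div_pow]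
  set f : ℕ → ℕ := fun j => 2 ^ (m * j) * (if h : j < n then k ⟨j, h⟩ else 0) with hf
  have hsum : (∑ j : Fin n, 2 ^ (m * (j : ℕ)) * k j) = ∑ j ∈ Finset.range n, f j := by
    rw [← Fin.sum_univ_eq_sum_range]
    refine Finset.sum_congr rfl fun j _ => ?_
    simp [hf, j.isLt]
  -- lower part bound
  have hL : ∀ t ≤ n, ∑ j ∈ Finset.range t, f j < 2 ^ (m * t) := by
    intro t ht
    induction t with
    | zero => simp
    | succ s ih =>
      rw [Finset.sum_range_succ]
      have hs : s < n := lt_of_lt_of_le (Nat.lt_succ_self s) ht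
      have hfs : f s + 2 ^ (m * s) ≤ 2 ^ (m * s) * 2 ^ m := by
        simp only [hf, hs, dif_pos]
        have : k ⟨s, hs⟩ + 1 ≤ 2 ^ m := hk ⟨s, hs⟩
        calc 2 ^ (m * s) * k ⟨s, hs⟩ + 2 ^ (m * s)
            = 2 ^ (m * s) * (k ⟨s, hs⟩ + 1) := by ring
          _ ≤ 2 ^ (m * s) * 2 ^ m := Nat.mul_le_mul_left _ this
      have h1 : (2:ℕ) ^ (m * s) * 2 ^ m = 2 ^ (m * (s + 1)) := by
        rw [← pow_add]; ring_nf
      have h2 := ih (le_of_lt hs)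
      omega
  -- split the sum
  have hin : (i : ℕ) < n := i.isLt
  have hsplit : ∑ j ∈ Finset.range n, f j =
      (∑ j ∈ Finset.range (i : ℕ), f j) + f i +
      ∑ j ∈ Finset.Ico ((i : ℕ) + 1) n, f j := by
    rw [Finset.range_eq_Ico, ← Finset.sum_Ico_consecutive _ (Nat.zero_le (i : ℕ)) (le_of_lt hin),
      Finset.sum_eq_sum_Ico_succ_bot hin, ← Finset.range_eq_Ico]
    ring
  -- high part divisibility
  have hdvd : (2 : ℕ) ^ (m * (i : ℕ)) * 2 ^ m ∣ ∑ j ∈ Finset.Ico ((i : ℕ) + 1) n, f j := by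
    refine Finset.dvd_sum fun j hj => ?_
    have hji : (i : ℕ) + 1 ≤ j := (Finset.mem_Ico.mp hj).1
    have : (2 : ℕ) ^ (m * (i : ℕ)) * 2 ^ m ∣ 2 ^ (m * j) := by
      rw [← pow_add]
      exact pow_dvd_pow 2 (by nlinarith)
    exact this.mul_right _
  obtain ⟨c, hc⟩ := hdvd
  have hfi : f i = 2 ^ (m * (i : ℕ)) * k i := by simp [hf, hin]
  rw [hsum, hsplit, hc, hfi]
  have : (∑ j ∈ Finset.range (i : ℕ), f j) + 2 ^ (m * (i : ℕ)) * k i +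
      2 ^ (m * (i : ℕ)) * 2 ^ m * c =
      (∑ j ∈ Finset.range (i : ℕ), f j) + (k i + 2 ^ m * c) * 2 ^ (m * (i : ℕ)) := by ring
  rw [this, Nat.add_mul_div_right _ _ (pow_pos (by norm_num) _),
    Nat.div_eq_of_lt (hL _ (le_of_lt hin)), zero_add, Nat.add_mul_mod_self_left,
    Nat.mod_eq_of_lt (hk i)]
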